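/- Let N and N_r be integers with 2 ≤ N ≤ N_r, set n = N·N_r, and for N ≤ k ≤ (N−1)·(N_r+1) + 1 define G_{n,k}(u) = ∑_{i=0}^{k−1} [n!·C(k−1,i)·(−1)^i / ((n−k+i+1)·(n−k)!·(k−1)!)] · u^{n−k+i+1}. Let p_N, …, p_{(N−1)(N_r+1)+1} be nonnegative reals summing to 1. Then lim_{u→0⁺} [∑_{k=N}^{(N−1)(N_r+1)+1} p_k · G_{n,k}(u)] / u^{N_r − N + 1} = p_{(N−1)(N_r+1)+1} · (N·N_r)! / ((N_r − N + 1) · (N_r − N)! · ((N−1)·(N_r+1))!). -/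

import Mathlib

/-- `G n k u = ∑_{i=0}^{k−1} n!·C(k−1,i)·(−1)^i / ((n−k+i+1)(n−k)!(k−1)!) · u^{n−k+i+1}`,
the CDF of the `k`-th largest of `n` i.i.d. random variables expressed as a
polynomial in the common per-entry CDF value `u`. -/
noncomputable def orderCDF (n k : ℕ) (u : ℝ) : ℝ :=
  ∑ i ∈ Finset.range k,
    ((n.factorial : ℝ) * (((k - 1).choose i : ℝ)) * (-1 : ℝ) ^ i
        / (((n : ℝ) - (k : ℝ) + (i : ℝ) + 1) * ((n - k).factorial : ℝ)
            * ((k - 1).factorial : ℝ)))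
      * u ^ (n - k + i + 1)

/-- Diversity order of SRS: for `2 ≤ N ≤ Nr`, `n = N·Nr`, and nonnegative reals
`p_N, …, p_{(N−1)(Nr+1)+1}` summing to `1`,
`lim_{u→0⁺} (∑ₖ p_k · G_{n,k}(u)) / u^{Nr−N+1}
   = p_{(N−1)(Nr+1)+1} · (N·Nr)! / ((Nr−N+1) · (Nr−N)! · ((N−1)·(Nr+1))!)`. -/
theorem SRS_diversity_order (N Nr : ℕ) (hN : 2 ≤ N) (hNr : N ≤ Nr)
    (p : ℕ → ℝ) (hp0 : ∀ k ∈ Finset.Icc N ((N - 1) * (Nr + 1) + 1), 0 ≤ p k)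
    (hp1 : ∑ k ∈ Finset.Icc N ((N - 1) * (Nr + 1) + 1), p k = 1) :
    Filter.Tendsto
      (fun u : ℝ =>
        (∑ k ∈ Finset.Icc N ((N - 1) * (Nr + 1) + 1), p k * orderCDF (N * Nr) k u)
          / u ^ (Nr - N + 1))
      (nhdsWithin 0 (Set.Ioi 0))
      (nhds (p ((N - 1) * (Nr + 1) + 1) * ((N * Nr).factorial : ℝ)
        / (((Nr : ℝ) - (N : ℝ) + 1) * ((Nr - N).factorial : ℝ)
            * (((N - 1) * (Nr + 1)).factorial : ℝ)))) := by
  obtain ⟨M, rfl⟩ : ∃ M, N = M + 1 := ⟨N - 1, by omega⟩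
  set n := (M + 1) * Nr with hn
  set K := (M + 1 - 1) * (Nr + 1) + 1 with hK
  set E := Nr - (M + 1) + 1 with hE
  have hK' : K = M * Nr + (M + 1) := by rw [hK]; simp; ring
  have hn' : n = M * Nr + Nr := by rw [hn]; ring
  have hKn : K ≤ n := by rw [hK', hn']; exact Nat.add_le_add_left hNr _
  have hnK : n - K = Nr - (M + 1) := by rw [hK', hn', Nat.add_sub_add_left]
  have hNK : M + 1 ≤ K := by rw [hK']; exact Nat.le_add_left _ _
  have hle : ∀ k ∈ Finset.Icc (M+1) K, ∀ i ∈ Finset.range k, E ≤ n - k + i + 1 := by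
    intro k hk i _
    rw [Finset.mem_Icc] at hk
    have h1 : n - K ≤ n - k := Nat.sub_le_sub_left hk.2 n
    omega
  set c : ℕ → ℕ → ℝ := fun k i =>
    (n.factorial : ℝ) * (((k - 1).choose i : ℝ)) * (-1 : ℝ) ^ i
        / (((n : ℝ) - (k : ℝ) + (i : ℝ) + 1) * ((n - k).factorial : ℝ)
            * ((k - 1).factorial : ℝ)) with hc
  set g : ℝ → ℝ := fun u =>
    ∑ k ∈ Finset.Icc (M+1) K, p k * ∑ i ∈ Finset.range k, c k i * u ^ (n - k + i + 1 - E)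
    with hg
  have heq : ∀ u ∈ Set.Ioi (0:ℝ),
      (∑ k ∈ Finset.Icc (M+1) K, p k * orderCDF n k u) / u ^ E = g u := by
    intro u hu
    have hu0 : u ≠ 0 := ne_of_gt hu
    rw [hg, Finset.sum_div]
    refine Finset.sum_congr rfl fun k hk => ?_
    rw [orderCDF, mul_div_assoc, Finset.sum_div]
    congr 1
    refine Finset.sum_congr rfl fun i hi => ?_
    rw [mul_div_assoc]
    congr 1
    exact (pow_sub₀ u hu0 (hle k hk i hi)).symm
  have hgcont : Continuous g := by
    refine continuous_finset_sum _ fun k _ => Continuous.mul continuous_const ?_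
    exact continuous_finset_sum _ fun i _ => Continuous.mul continuous_const (continuous_pow _)
  have hg0 : g 0 = p K * (n.factorial : ℝ)
        / (((Nr : ℝ) - ((M + 1 : ℕ) : ℝ) + 1) * ((Nr - (M + 1)).factorial : ℝ)
            * (((M + 1 - 1) * (Nr + 1)).factorial : ℝ)) := by
    simp only [hg]
    rw [Finset.sum_eq_single K]
    · rw [Finset.sum_eq_single 0]
      · have he0 : n - K + 0 + 1 - E = 0 := by omega
        rw [he0, pow_zero, mul_one, hc]
        simp only [Nat.choose_zero_right, pow_zero, Nat.cast_one, mul_one]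
        have hK1 : K - 1 = (M + 1 - 1) * (Nr + 1) := by omega
        have hcast : ((n : ℝ) - (K : ℝ) + ((0:ℕ) : ℝ) + 1) = (Nr : ℝ) - ((M + 1 : ℕ) : ℝ) + 1 := by
          have h1 : ((Nr - (M+1) : ℕ) : ℝ) = (n : ℝ) - K := by rw [← hnK]; exact Nat.cast_sub hKn
          have h2 : ((Nr - (M+1) : ℕ) : ℝ) = (Nr : ℝ) - ((M+1:ℕ):ℝ) := Nat.cast_sub hNr
          rw [Nat.cast_zero, add_zero, ← h1, h2]
        rw [hnK, hK1, hcast]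
        ring
      · intro i hi hi0
        have : n - K + i + 1 - E ≠ 0 := by omega
        rw [zero_pow this, mul_zero]
      · intro h
        exact absurd (Finset.mem_range.mpr (by omega)) h
    · intro k hk hkK
      rw [Finset.mem_Icc] at hk
      have hkK' : k < K := lt_of_le_of_ne hk.2 hkK
      rw [Finset.sum_eq_zero, mul_zero]
      intro i _
      have : n - k + i + 1 - E ≠ 0 := by omega
      rw [zero_pow this, mul_zero]
    · intro h
      exact absurd (Finset.mem_Icc.mpr ⟨hNK, le_refl K⟩) h
  have hgt : Filter.Tendsto g (nhdsWithin 0 (Set.Ioi 0))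
      (nhds (p K * (n.factorial : ℝ)
        / (((Nr : ℝ) - ((M + 1 : ℕ) : ℝ) + 1) * ((Nr - (M + 1)).factorial : ℝ)
            * (((M + 1 - 1) * (Nr + 1)).factorial : ℝ)))) := by
    rw [← hg0]
    exact (hgcont.tendsto 0).mono_left nhdsWithin_le_nhds
  exact hgt.congr' (Filter.eventuallyEq_of_mem self_mem_nhdsWithin fun u hu => (heq u hu).symm)
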